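/- The Wilson polynomials R_n(x) defined by the explicit ₄F₃ formula satisfy the second-order difference equation n(n+a+b+c+d−1)R_n(x) = A(−x)[R_n(x+i) − R_n(x)] + A(x)[R_n(x−i) − R_n(x)], where A(x) = (a+ix)(b+ix)(c+ix)(d+ix)/(2ix(2ix+1)). -/

import Mathlib

open Complex

/-- The Pochhammer symbol (z)_k in ℂ. -/
noncomputable def pch (z : ℂ) (k : ℕ) : ℂ := ∏ j ∈ Finset.range k, (z + j)

noncomputable def Afun (a b c d x : ℂ) : ℂ :=
  (a + I * x) * (b + I * x) * (c + I * x) * (d + I * x) / (2 * I * x * (2 * I * x + 1))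

/-- The Wilson polynomial R_n(x;a,b,c,d) as a finite ₄F₃ sum. -/
noncomputable def wilsonR (a b c d : ℂ) (n : ℕ) (x : ℂ) : ℂ :=
  ∑ k ∈ Finset.range (n + 1),
    pch (-(n : ℂ)) k * pch ((n : ℂ) + a + b + c + d - 1) k *
      pch (a + I * x) k * pch (a - I * x) k /
      (pch (a + b) k * pch (a + c) k * pch (a + d) k * (k.factorial : ℂ))

/- ## Auxiliary lemmas -/

lemma pch_succ (z : ℂ) (k : ℕ) : pch z (k+1) = pch z k * (z + k) := by
  simp [pch, Finset.prod_range_succ]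

lemma pch_succ' (z : ℂ) (k : ℕ) : pch z (k+1) = z * pch (z+1) k := by
  rw [pch, Finset.prod_range_succ']
  rw [mul_comm]
  congr 1
  · simp
  · rw [pch]
    exact Finset.prod_congr rfl fun j _ => by push_cast; ring

lemma pch_ne_zero {z : ℂ} (h : ∀ m : ℕ, z ≠ -(m : ℂ)) (k : ℕ) : pch z k ≠ 0 := by
  rw [pch]
  exact Finset.prod_ne_zero_iff.mpr fun j _ hj => h j (eq_neg_of_add_eq_zero_left hj)

/-- The x-dependent part of the k-th term of the ₄F₃ sum. -/
noncomputable def Tf (a x : ℂ) (k : ℕ) : ℂ := pch (a + I * x) k * pch (a - I * x) k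

/-- Forward difference of the k-th basis function. -/
lemma d1new (a x : ℂ) (m : ℕ) :
    Tf a (x+I) (m+1) - Tf a x (m+1)
      = ((m:ℂ)+1) * (2*I*x - 1) * pch (a+I*x) m * pch ((a-I*x)+1) m := by
  have e1 : a + I*(x+I) = (a + I*x) - 1 := by rw [mul_add, I_mul_I]; ring
  have e2 : a - I*(x+I) = (a - I*x) + 1 := by rw [mul_add, I_mul_I]; ring
  have f1 : pch ((a+I*x) - 1) (m+1) = ((a+I*x) - 1) * pch (a+I*x) m := by
    rw [pch_succ', sub_add_cancel]
  rw [Tf, Tf, e1, e2, f1, pch_succ ((a-I*x)+1) m, pch_succ (a+I*x) m, pch_succ' (a-I*x) m]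
  ring

/-- Backward difference of the k-th basis function. -/
lemma d2new (a x : ℂ) (m : ℕ) :
    Tf a (x-I) (m+1) - Tf a x (m+1)
      = ((m:ℂ)+1) * (-(2*I*x) - 1) * pch ((a+I*x)+1) m * pch (a-I*x) m := by
  have e3 : a + I*(x-I) = (a + I*x) + 1 := by rw [mul_sub, I_mul_I]; ring
  have e4 : a - I*(x-I) = (a - I*x) - 1 := by rw [mul_sub, I_mul_I]; ring
  have f1 : pch ((a-I*x) - 1) (m+1) = ((a-I*x) - 1) * pch (a-I*x) m := by
    rw [pch_succ', sub_add_cancel]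
  rw [Tf, Tf, e3, e4, f1, pch_succ ((a+I*x)+1) m, pch_succ' (a+I*x) m, pch_succ (a-I*x) m]
  ring

lemma hA1 (a b c d x : ℂ) :
    Afun a b c d (-x)
      = ((a-I*x)*(b-I*x)*(c-I*x)*(d-I*x)) / ((2*I*x) * (2*I*x - 1)) := by
  rw [Afun]
  rw [show a + I * -x = a - I*x by ring, show b + I * -x = b - I*x by ring,
      show c + I * -x = c - I*x by ring, show d + I * -x = d - I*x by ring,
      show 2 * I * -x * (2 * I * -x + 1) = (2*I*x) * (2*I*x - 1) by ring]

lemma sub1 (a b c d x : ℂ) (h0 : 2*I*x ≠ 0) (h1 : 2*I*x - 1 ≠ 0) (m : ℕ) :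
    Afun a b c d (-x) * (Tf a (x+I) (m+1) - Tf a x (m+1))
      = ((m:ℂ)+1) * ((b-I*x)*(c-I*x)*(d-I*x)) * (pch (a+I*x) m * pch (a-I*x) (m+1))
          / (2*I*x) := by
  rw [hA1, d1new, pch_succ' (a-I*x) m, div_mul_eq_mul_div,
      div_eq_div_iff (mul_ne_zero h0 h1) h0]
  ring

lemma sub2 (a b c d x : ℂ) (h0 : 2*I*x ≠ 0) (h2 : 2*I*x + 1 ≠ 0) (m : ℕ) :
    Afun a b c d x * (Tf a (x-I) (m+1) - Tf a x (m+1))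
      = -(((m:ℂ)+1) * ((b+I*x)*(c+I*x)*(d+I*x)) * (pch (a-I*x) m * pch (a+I*x) (m+1)))
          / (2*I*x) := by
  rw [Afun, d2new, pch_succ' (a+I*x) m, div_mul_eq_mul_div,
      div_eq_div_iff (mul_ne_zero h0 h2) h0]
  ring

/-- The action of the Wilson difference operator on the basis functions. -/
lemma key (a b c d x : ℂ) (h0 : 2*I*x ≠ 0) (h1 : 2*I*x - 1 ≠ 0) (h2 : 2*I*x + 1 ≠ 0)
    (k : ℕ) :
    Afun a b c d (-x) * (Tf a (x+I) k - Tf a x k)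
      + Afun a b c d x * (Tf a (x-I) k - Tf a x k)
    = (k:ℂ) * ((k:ℂ) + a + b + c + d - 1) * Tf a x k
      - (k:ℂ) * (a+b+(k:ℂ)-1) * (a+c+(k:ℂ)-1) * (a+d+(k:ℂ)-1) * Tf a x (k-1) := by
  cases k with
  | zero => simp [Tf, pch]
  | succ m =>
    rw [sub1 a b c d x h0 h1 m, sub2 a b c d x h0 h2 m]
    simp only [Nat.add_sub_cancel]
    push_cast
    rw [show Tf a x (m+1) = pch (a+I*x) (m+1) * pch (a-I*x) (m+1) from rfl,
        show Tf a x m = pch (a+I*x) m * pch (a-I*x) m from rfl,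
        pch_succ (a+I*x) m, pch_succ (a-I*x) m,
        ← add_div, div_eq_iff h0]
    ring

/-- The x-independent coefficient of the k-th term of the ₄F₃ sum. -/
noncomputable def Df (a b c d : ℂ) (n k : ℕ) : ℂ :=
  pch (-(n:ℂ)) k * pch ((n:ℂ) + a + b + c + d - 1) k /
    (pch (a+b) k * pch (a+c) k * pch (a+d) k * (k.factorial : ℂ))

lemma wilsonR_eq (a b c d : ℂ) (n : ℕ) (y : ℂ) :
    wilsonR a b c d n y = ∑ k ∈ Finset.range (n+1), Df a b c d n k * Tf a y k := by
  unfold wilsonR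
  exact Finset.sum_congr rfl fun k _ => by rw [Df, Tf]; ring

lemma Dratio (a b c d : ℂ) (n : ℕ)
    (hab : ∀ m : ℕ, a + b ≠ -(m : ℂ)) (hac : ∀ m : ℕ, a + c ≠ -(m : ℂ))
    (had : ∀ m : ℕ, a + d ≠ -(m : ℂ)) (k : ℕ) :
    Df a b c d n (k+1) * (((k:ℂ)+1) * ((a+b+k)*(a+c+k)*(a+d+k)))
      = Df a b c d n k * (((k:ℂ) - n) * ((n:ℂ)+a+b+c+d-1+k)) := by
  have nb : pch (a+b) k ≠ 0 := pch_ne_zero hab k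
  have nc : pch (a+c) k ≠ 0 := pch_ne_zero hac k
  have nd : pch (a+d) k ≠ 0 := pch_ne_zero had k
  have nb' : a+b+(k:ℂ) ≠ 0 := fun h => hab k (by linear_combination h)
  have nc' : a+c+(k:ℂ) ≠ 0 := fun h => hac k (by linear_combination h)
  have nd' : a+d+(k:ℂ) ≠ 0 := fun h => had k (by linear_combination h)
  have nf : (k.factorial : ℂ) ≠ 0 := Nat.cast_ne_zero.mpr k.factorial_ne_zero
  have nk : ((k:ℂ)+1) ≠ 0 := Nat.cast_add_one_ne_zero k
  rw [Df, Df, pch_succ, pch_succ, pch_succ, pch_succ, pch_succ, Nat.factorial_succ]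
  push_cast
  rw [div_mul_eq_mul_div, div_mul_eq_mul_div,
      div_eq_div_iff
        (mul_ne_zero (mul_ne_zero (mul_ne_zero (mul_ne_zero nb nb') (mul_ne_zero nc nc'))
          (mul_ne_zero nd nd')) (mul_ne_zero nk nf))
        (mul_ne_zero (mul_ne_zero (mul_ne_zero nb nc) nd) nf)]
  ring

/-- The second order difference equation for the Wilson polynomials:
n(n+a+b+c+d−1)R_n(x) = A(−x)[R_n(x+i) − R_n(x)] + A(x)[R_n(x−i) − R_n(x)]. -/
theorem wilsonR_difference_equation (a b c d x : ℂ) (n : ℕ)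
    (h0 : 2 * I * x ≠ 0) (h1 : 2 * I * x ≠ 1) (h2 : 2 * I * x ≠ -1)
    (hab : ∀ m : ℕ, a + b ≠ -(m : ℂ)) (hac : ∀ m : ℕ, a + c ≠ -(m : ℂ))
    (had : ∀ m : ℕ, a + d ≠ -(m : ℂ)) :
    (n : ℂ) * ((n : ℂ) + a + b + c + d - 1) * wilsonR a b c d n x =
      Afun a b c d (-x) * (wilsonR a b c d n (x + I) - wilsonR a b c d n x) +
        Afun a b c d x * (wilsonR a b c d n (x - I) - wilsonR a b c d n x) := by
  have h1' : 2*I*x - 1 ≠ 0 := sub_ne_zero.mpr h1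
  have h2' : 2*I*x + 1 ≠ 0 := fun h => h2 (by linear_combination h)
  simp only [wilsonR_eq]
  rw [← Finset.sum_sub_distrib, ← Finset.sum_sub_distrib, Finset.mul_sum, Finset.mul_sum,
      Finset.mul_sum, ← Finset.sum_add_distrib]
  have step1 : ∀ k ∈ Finset.range (n+1),
      Afun a b c d (-x) * (Df a b c d n k * Tf a (x+I) k - Df a b c d n k * Tf a x k)
        + Afun a b c d x * (Df a b c d n k * Tf a (x-I) k - Df a b c d n k * Tf a x k)
      = ((k:ℂ) * ((k:ℂ)+a+b+c+d-1)) * (Df a b c d n k * Tf a x k)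
        - Df a b c d n k * ((k:ℂ) * ((a+b+(k:ℂ)-1) * ((a+c+(k:ℂ)-1) * (a+d+(k:ℂ)-1))))
            * Tf a x (k-1) := fun k _ => by
    linear_combination (Df a b c d n k) * key a b c d x h0 h1' h2' k
  rw [Finset.sum_congr rfl step1, Finset.sum_sub_distrib]
  have step2 : ∑ k ∈ Finset.range (n+1),
        Df a b c d n k * ((k:ℂ) * ((a+b+(k:ℂ)-1) * ((a+c+(k:ℂ)-1) * (a+d+(k:ℂ)-1))))
          * Tf a x (k-1)
      = ∑ k ∈ Finset.range (n+1),
          (((k:ℂ) - n) * ((n:ℂ)+a+b+c+d-1+k)) * (Df a b c d n k * Tf a x k) := by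
    rw [Finset.sum_range_succ'
          (fun k => Df a b c d n k * ((k:ℂ) * ((a+b+(k:ℂ)-1) * ((a+c+(k:ℂ)-1) * (a+d+(k:ℂ)-1))))
            * Tf a x (k-1)) n,
        Finset.sum_range_succ
          (fun k => (((k:ℂ) - n) * ((n:ℂ)+a+b+c+d-1+k)) * (Df a b c d n k * Tf a x k)) n]
    simp only [Nat.cast_zero, zero_mul, mul_zero, sub_self, zero_mul, add_zero]
    exact Finset.sum_congr rfl fun j _ => by
      simp only [Nat.add_sub_cancel]
      push_cast
      linear_combination (Tf a x j) * Dratio a b c d n hab hac had j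
  rw [step2, ← Finset.sum_sub_distrib]
  exact Finset.sum_congr rfl fun k _ => by ring
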